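/- (Integral Flow / Circulation Theorem) In a circulation problem on a finite directed graph where every arc (v,w) has integer lower bound l(v,w) and integer upper bound u(v,w), if there exists any feasible real-valued circulation (satisfying l ≤ f ≤ u on each arc and flow conservation at every node), then there exists a feasible integer-valued circulation. -/

import Mathlib

open Finset

def IsIntR (x : ℝ) : Prop := ∃ n : ℤ, x = (n : ℝ)

lemma isIntR_sum {α : Type*} {s : Finset α} {F : α → ℝ}
    (h : ∀ a ∈ s, IsIntR (F a)) : IsIntR (∑ a ∈ s, F a) := by
  classical
  choose! n hn using h
  exact ⟨∑ a ∈ s, n a, by push_cast; exact Finset.sum_congr rfl hn⟩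

lemma isIntR_sub {x y : ℝ} (hx : IsIntR x) (hy : IsIntR y) : IsIntR (x - y) := by
  obtain ⟨a, rfl⟩ := hx; obtain ⟨b, rfl⟩ := hy; exact ⟨a - b, by push_cast; ring⟩

lemma lt_ceil_of_not_int {x : ℝ} (h : ¬ IsIntR x) : x < ⌈x⌉ := by
  rcases lt_or_eq_of_le (Int.le_ceil x) with h' | h'
  · exact h'
  · exact absurd ⟨⌈x⌉, h'⟩ h

lemma floor_lt_of_not_int {x : ℝ} (h : ¬ IsIntR x) : (⌊x⌋ : ℝ) < x := by
  rcases lt_or_eq_of_le (Int.floor_le x) with h' | h'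
  · exact h'
  · exact absurd ⟨⌊x⌋, h'.symm⟩ h

lemma telescope {g : ℕ → ℝ} {i J : ℕ} (h : i ≤ J) :
    ∑ k ∈ Finset.Ico i J, (g (k+1) - g k) = g J - g i := by
  induction J, h using Nat.le_induction with
  | base => simp
  | succ n hn ih => rw [Finset.sum_Ico_succ_top hn, ih]; ring

lemma exists_seq {α : Type*} (P : α → Prop) (R : α → α → Prop) (a0 : α) (h0 : P a0)
    (hstep : ∀ x, P x → ∃ y, P y ∧ R x y) :
    ∃ W : ℕ → α, W 0 = a0 ∧ ∀ n, P (W n) ∧ R (W n) (W (n+1)) := by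
  classical
  choose! nxt hP hR using hstep
  refine ⟨fun n => nxt^[n] a0, by simp, ?_⟩
  have key : ∀ n, P (nxt^[n] a0) := by
    intro n
    induction n with
    | zero => simpa using h0
    | succ n ih => rw [Function.iterate_succ_apply']; exact hP _ ih
  intro n
  refine ⟨key n, ?_⟩
  have := hR _ (key n)
  simpa [Function.iterate_succ_apply'] using this

noncomputable def fracSet {V : Type*} [Fintype V] (f : V → V → ℝ) : Finset (V × V) :=
  @Finset.filter _ (fun p => ¬ IsIntR (f p.1 p.2)) (Classical.decPred _) Finset.univ

lemma mem_fracSet {V : Type*} [Fintype V] {f : V → V → ℝ} {p : V × V} :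
    p ∈ fracSet f ↔ ¬ IsIntR (f p.1 p.2) := by
  simp [fracSet, Finset.mem_filter]

lemma step {V : Type*} [Fintype V] [DecidableEq V]
    (l u : V → V → ℤ) (f : V → V → ℝ)
    (hb : ∀ v w, (l v w : ℝ) ≤ f v w ∧ f v w ≤ (u v w : ℝ))
    (hc : ∀ v, ∑ w, f w v = ∑ w, f v w)
    {a b : V} (hab : ¬ IsIntR (f a b)) :
    ∃ f' : V → V → ℝ,
      (∀ v w, (l v w : ℝ) ≤ f' v w ∧ f' v w ≤ (u v w : ℝ)) ∧
      (∀ v, ∑ w, f' w v = ∑ w, f' v w) ∧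
      fracSet f' ⊂ fracSet f := by
  by_cases hself : ∃ v, ¬ IsIntR (f v v)
  · -- fractional self-loop: round it down
    obtain ⟨v, hv⟩ := hself
    set δ : ℝ := (⌊f v v⌋ : ℝ) - f v v with hδ
    refine ⟨fun x y => if x = v ∧ y = v then (⌊f v v⌋ : ℝ) else f x y, ?_, ?_, ?_⟩
    · intro x y
      dsimp only
      by_cases h : x = v ∧ y = v
      · rw [if_pos h, h.1, h.2]
        exact ⟨by exact_mod_cast Int.le_floor.mpr (hb v v).1,
          le_trans (Int.floor_le _) (hb v v).2⟩
      · rw [if_neg h]; exact hb x y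
    · intro x
      dsimp only
      have key : ∀ y z : V, (if y = v ∧ z = v then (⌊f v v⌋ : ℝ) else f y z)
          = f y z + (if y = v ∧ z = v then δ else 0) := by
        intro y z
        by_cases h : y = v ∧ z = v
        · rw [if_pos h, if_pos h, h.1, h.2, hδ]; ring
        · rw [if_neg h, if_neg h]; ring
      simp only [key]
      rw [Finset.sum_add_distrib, Finset.sum_add_distrib, hc x]
      congr 1
      by_cases hx : x = v
      · subst hx; simp
      · simp [hx]
    · have hsub : fracSet (fun x y => if x = v ∧ y = v then (⌊f v v⌋ : ℝ) else f x y) ⊆ fracSet f := by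
        intro p hp
        rw [mem_fracSet] at hp ⊢
        by_cases h : p.1 = v ∧ p.2 = v
        · exfalso; apply hp; rw [if_pos h]; exact ⟨⌊f v v⌋, rfl⟩
        · rwa [if_neg h] at hp
      rw [Finset.ssubset_iff_of_subset hsub]
      refine ⟨(v, v), mem_fracSet.mpr hv, ?_⟩
      rw [mem_fracSet]
      rw [if_pos ⟨rfl, rfl⟩]
      exact fun h => h ⟨⌊f v v⌋, rfl⟩
  · push_neg at hself
    -- no fractional self-loops
    -- degree claim
    have hdeg : ∀ (v : V) (p : V × V), ¬ IsIntR (f p.1 p.2) → (p.1 = v ∨ p.2 = v) →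
        ∃ q : V × V, q ≠ p ∧ ¬ IsIntR (f q.1 q.2) ∧ (q.1 = v ∨ q.2 = v) := by
      intro v p hp hinc
      by_contra hno
      push_neg at hno
      have hq : ∀ q : V × V, q ≠ p → (q.1 = v ∨ q.2 = v) → IsIntR (f q.1 q.2) := by
        intro q h1 h2
        by_contra hfr
        rcases (hno q h1 hfr) with ⟨c1, c2⟩
        rcases h2 with h2 | h2
        · exact c1 h2
        · exact c2 h2
      rcases hinc with h1 | h1
      · -- p = (v, p.2)
        have hav : p.2 ≠ v := by
          intro h
          apply hp
          rw [h1, h]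
          exact hself v
        have hin : ∀ w, IsIntR (f w v) := by
          intro w
          refine hq (w, v) (fun h => hav ?_) (Or.inr rfl)
          rw [← h]
        have hout : ∀ w, w ≠ p.2 → IsIntR (f v w) := by
          intro w hw
          refine hq (v, w) (fun h => hw ?_) (Or.inl rfl)
          rw [← h]
        apply hp
        rw [h1]
        have hsum : f v p.2 = (∑ w, f w v) - ∑ w ∈ Finset.univ.erase p.2, f v w := by
          rw [hc v, ← Finset.add_sum_erase _ _ (Finset.mem_univ p.2)]
          ring
        rw [hsum]
        exact isIntR_sub (isIntR_sum (fun w _ => hin w))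
          (isIntR_sum (fun w hw => hout w (Finset.ne_of_mem_erase hw)))
      · -- p = (p.1, v)
        have hav : p.1 ≠ v := by
          intro h
          apply hp
          rw [h1, h]
          exact hself v
        have hout : ∀ w, IsIntR (f v w) := by
          intro w
          refine hq (v, w) (fun h => hav ?_) (Or.inl rfl)
          rw [← h]
        have hin : ∀ w, w ≠ p.1 → IsIntR (f w v) := by
          intro w hw
          refine hq (w, v) (fun h => hw ?_) (Or.inr rfl)
          rw [← h]
        apply hp
        rw [h1]
        have hsum : f p.1 v = (∑ w, f v w) - ∑ w ∈ Finset.univ.erase p.1, f w v := by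
          rw [← hc v, ← Finset.add_sum_erase _ _ (Finset.mem_univ p.1)]
          ring
        rw [hsum]
        exact isIntR_sub (isIntR_sum (fun w _ => hout w))
          (isIntR_sum (fun w hw => hin w (Finset.ne_of_mem_erase hw)))
    -- build an infinite walk over fractional arcs
    obtain ⟨W, hW0, hW⟩ := exists_seq
      (fun s : V × (V × V) => ¬ IsIntR (f s.2.1 s.2.2) ∧ (s.2.1 = s.1 ∨ s.2.2 = s.1))
      (fun s t => t.2 ≠ s.2 ∧ (t.2 = (s.1, t.1) ∨ t.2 = (t.1, s.1)))
      (b, (a, b)) ⟨hab, Or.inr rfl⟩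
      (by
        rintro ⟨v, p⟩ ⟨hfr, hinc⟩
        obtain ⟨q, hqne, hqfr, hqinc⟩ := hdeg v p hfr hinc
        rcases hqinc with h | h
        · exact ⟨(q.2, q), ⟨hqfr, Or.inr rfl⟩, hqne, Or.inl (Prod.ext_iff.mpr ⟨h, rfl⟩)⟩
        · exact ⟨(q.1, q), ⟨hqfr, Or.inl rfl⟩, hqne, Or.inr (Prod.ext_iff.mpr ⟨rfl, h⟩)⟩)
    set v : ℕ → V := fun n => (W n).1 with hvdef
    set e : ℕ → V × V := fun n => (W (n + 1)).2 with hedef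
    have hfr : ∀ k, ¬ IsIntR (f (e k).1 (e k).2) := fun k => (hW (k + 1)).1.1
    have he : ∀ k, e k = (v k, v (k + 1)) ∨ e k = (v (k + 1), v k) := fun k => (hW k).2.2
    have hene : ∀ k, e (k + 1) ≠ e k := fun k => (hW (k + 1)).2.1
    have hvne : ∀ k, v k ≠ v (k + 1) := by
      intro k h
      rcases he k with h' | h' <;> rw [← h] at h' <;>
        exact (hfr k) (by rw [h']; exact hself (v k))
    -- find first repeated vertex
    have hrep : ∃ jj, ∃ ii, ii < jj ∧ v ii = v jj := by
      have hnotinj : ¬ Function.Injective (fun n : Fin (Fintype.card V + 1) => v n) := by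
        intro hinj
        have := Fintype.card_le_of_injective _ hinj
        simp at this
      rw [Function.not_injective_iff] at hnotinj
      obtain ⟨n, m, hnm, hne⟩ := hnotinj
      rcases hne.lt_or_gt with h | h
      · exact ⟨m, n, h, hnm⟩
      · exact ⟨n, m, h, hnm.symm⟩
    classical
    set J := Nat.find hrep with hJdef
    obtain ⟨i, hiJ, hviJ⟩ := Nat.find_spec hrep
    have hinj : ∀ k m, k < J → m < J → v k = v m → k = m := by
      intro k m hk hm h
      by_contra hne
      rcases Ne.lt_or_gt hne with hlt | hlt
      · exact Nat.find_min hrep hm ⟨k, hlt, h⟩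
      · exact Nat.find_min hrep hk ⟨m, hlt, h.symm⟩
    -- signs and capacities
    set sgn : ℕ → ℝ := fun k => if e k = (v k, v (k + 1)) then 1 else -1 with hsgndef
    set cap : ℕ → ℝ := fun k => if e k = (v k, v (k + 1))
      then (⌈f (e k).1 (e k).2⌉ : ℝ) - f (e k).1 (e k).2
      else f (e k).1 (e k).2 - (⌊f (e k).1 (e k).2⌋ : ℝ) with hcapdef
    have hcap : ∀ k, 0 < cap k := by
      intro k
      rw [hcapdef]
      dsimp only
      split
      · exact sub_pos.mpr (lt_ceil_of_not_int (hfr k))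
      · exact sub_pos.mpr (floor_lt_of_not_int (hfr k))
    have hIco : (Finset.Ico i J).Nonempty := ⟨i, Finset.mem_Ico.mpr ⟨le_refl i, hiJ⟩⟩
    set ε := (Finset.Ico i J).inf' hIco cap with hεdef
    have hε : 0 < ε := by
      rw [hεdef, Finset.lt_inf'_iff]
      exact fun k _ => hcap k
    have hεle : ∀ k ∈ Finset.Ico i J, ε ≤ cap k := fun k hk => Finset.inf'_le cap hk
    obtain ⟨k0, hk0, hk0e⟩ := Finset.exists_mem_eq_inf' hIco cap
    -- distinctness of the arcs in the extracted cycle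
    have edist : ∀ k m, k < m → m < J → e k ≠ e m := by
      intro k m hkm hmJ hEq
      have hkJ : k < J := lt_trans hkm hmJ
      have hsucc : ∀ x y : V, v (k+1) = v m → x = y → False := by
        intro _ _ h _
        have h1 : k + 1 = m := by
          rcases Nat.lt_or_ge (k + 1) m with h' | h'
          · exact absurd (hinj (k + 1) m (lt_trans h' hmJ) hmJ h) (Nat.ne_of_lt h')
          · exact le_antisymm (Nat.succ_le_of_lt hkm) h'
        exact hene k (h1 ▸ hEq.symm)
      rcases he k with hk | hk <;> rcases he m with hm | hm <;>
        have hcomp := hk.symm.trans (hEq.trans hm)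
      · exact absurd (hinj k m hkJ hmJ ((Prod.ext_iff.mp hcomp).1)) (Nat.ne_of_lt hkm)
      · exact hsucc a a ((Prod.ext_iff.mp hcomp).2) rfl
      · exact hsucc a a ((Prod.ext_iff.mp hcomp).1) rfl
      · exact absurd (hinj k m hkJ hmJ ((Prod.ext_iff.mp hcomp).2)) (Nat.ne_of_lt hkm)
    -- the perturbation coefficient
    set c : V × V → ℝ := fun q => ∑ k ∈ Finset.Ico i J, if e k = q then sgn k else 0 with hcdef
    have c_eq : ∀ k ∈ Finset.Ico i J, c (e k) = sgn k := by
      intro k hk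
      rw [hcdef]
      dsimp only
      rw [Finset.sum_eq_single_of_mem k hk]
      · rw [if_pos rfl]
      · intro m hm hne
        rw [if_neg]
        rcases hne.lt_or_gt with hlt | hlt
        · exact edist m k hlt (Finset.mem_Ico.mp hk).2
        · exact (edist k m hlt (Finset.mem_Ico.mp hm).2).symm
    have c_zero : ∀ q, (∀ k ∈ Finset.Ico i J, e k ≠ q) → c q = 0 := by
      intro q hq
      rw [hcdef]
      dsimp only
      exact Finset.sum_eq_zero fun k hk => if_neg (hq k hk)
    refine ⟨fun x y => f x y + ε * c (x, y), ?_, ?_, ?_⟩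
    · -- bounds
      intro x y
      dsimp only
      by_cases hex : ∃ k ∈ Finset.Ico i J, e k = (x, y)
      · obtain ⟨k, hk, hke⟩ := hex
        have hcxy : c (x, y) = sgn k := by rw [← hke]; exact c_eq k hk
        have hfk : f (e k).1 (e k).2 = f x y := by rw [hke]
        have hεk := hεle k hk
        rw [hcxy]
        by_cases hcase : e k = (v k, v (k + 1))
        · have hs : sgn k = 1 := by rw [hsgndef]; exact if_pos hcase
          have hcapk : cap k = (⌈f x y⌉ : ℝ) - f x y := by
            rw [hcapdef]; dsimp only; rw [if_pos hcase, hfk]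
          have hceil : (⌈f x y⌉ : ℝ) ≤ (u x y : ℝ) :=
            Int.cast_le.mpr (Int.ceil_le.mpr (hb x y).2)
          rw [hcapk] at hεk
          rw [hs]
          constructor
          · linarith [(hb x y).1]
          · linarith
        · have hs : sgn k = -1 := by rw [hsgndef]; exact if_neg hcase
          have hcapk : cap k = f x y - (⌊f x y⌋ : ℝ) := by
            rw [hcapdef]; dsimp only; rw [if_neg hcase, hfk]
          have hfl : (l x y : ℝ) ≤ (⌊f x y⌋ : ℝ) :=
            Int.cast_le.mpr (Int.le_floor.mpr (hb x y).1)
          rw [hcapk] at hεk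
          rw [hs]
          constructor
          · linarith
          · linarith [(hb x y).2]
      · push_neg at hex
        rw [c_zero _ hex, mul_zero, add_zero]
        exact hb x y
    · -- conservation
      intro x
      dsimp only
      rw [Finset.sum_add_distrib, Finset.sum_add_distrib, ← Finset.mul_sum, ← Finset.mul_sum,
        hc x]
      congr 1
      congr 1
      have swap1 : ∑ w, c (w, x) = ∑ k ∈ Finset.Ico i J, (if (e k).2 = x then sgn k else 0) := by
        rw [hcdef]
        dsimp only
        rw [Finset.sum_comm]
        refine Finset.sum_congr rfl fun k _ => ?_
        by_cases h2 : (e k).2 = x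
        · rw [if_pos h2]
          have hterm : ∀ w : V, (if e k = (w, x) then sgn k else 0)
              = (if (e k).1 = w then sgn k else 0) := by
            intro w
            by_cases h : (e k).1 = w
            · rw [if_pos h, if_pos (Prod.ext_iff.mpr ⟨h, h2⟩)]
            · rw [if_neg h, if_neg (fun hEq => h ((Prod.ext_iff.mp hEq).1))]
          rw [Finset.sum_congr rfl fun w _ => hterm w]
          simp [Finset.sum_ite_eq]
        · rw [if_neg h2]
          exact Finset.sum_eq_zero fun w _ =>
            if_neg (fun hEq => h2 ((Prod.ext_iff.mp hEq).2))
      have swap2 : ∑ w, c (x, w) = ∑ k ∈ Finset.Ico i J, (if (e k).1 = x then sgn k else 0) := by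
        rw [hcdef]
        dsimp only
        rw [Finset.sum_comm]
        refine Finset.sum_congr rfl fun k _ => ?_
        by_cases h1 : (e k).1 = x
        · rw [if_pos h1]
          have hterm : ∀ w : V, (if e k = (x, w) then sgn k else 0)
              = (if (e k).2 = w then sgn k else 0) := by
            intro w
            by_cases h : (e k).2 = w
            · rw [if_pos h, if_pos (Prod.ext_iff.mpr ⟨h1, h⟩)]
            · rw [if_neg h, if_neg (fun hEq => h ((Prod.ext_iff.mp hEq).2))]
          rw [Finset.sum_congr rfl fun w _ => hterm w]
          simp [Finset.sum_ite_eq]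
        · rw [if_neg h1]
          exact Finset.sum_eq_zero fun w _ =>
            if_neg (fun hEq => h1 ((Prod.ext_iff.mp hEq).1))
      rw [swap1, swap2, ← sub_eq_zero, ← Finset.sum_sub_distrib]
      have per : ∀ k ∈ Finset.Ico i J,
          (if (e k).2 = x then sgn k else 0) - (if (e k).1 = x then sgn k else 0)
          = (if v (k + 1) = x then (1 : ℝ) else 0) - (if v k = x then (1 : ℝ) else 0) := by
        intro k _
        rcases he k with h | h
        · have hs : sgn k = 1 := by rw [hsgndef]; exact if_pos h
          rw [hs, h]
        · have hemm : e k ≠ (v k, v (k + 1)) := by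
            rw [h]
            intro hEq
            exact hvne k ((Prod.ext_iff.mp hEq).1).symm
          have hs : sgn k = -1 := by rw [hsgndef]; exact if_neg hemm
          rw [hs, h]
          dsimp only
          split_ifs <;> ring
      rw [Finset.sum_congr rfl per]
      refine (telescope (g := fun n => if v n = x then (1 : ℝ) else 0) (le_of_lt hiJ)).trans ?_
      rw [← hviJ]
      simp
    · -- strict decrease of the fractional set
      have hsub : fracSet (fun x y => f x y + ε * c (x, y)) ⊆ fracSet f := by
        intro p hp
        rw [mem_fracSet] at hp ⊢
        by_cases hex : ∃ k ∈ Finset.Ico i J, e k = p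
        · obtain ⟨k, hk, hke⟩ := hex
          rw [← hke]
          exact hfr k
        · push_neg at hex
          intro hint
          apply hp
          rw [Prod.mk.eta, c_zero p hex, mul_zero, add_zero]
          exact hint
      rw [Finset.ssubset_iff_of_subset hsub]
      refine ⟨e k0, mem_fracSet.mpr (hfr k0), ?_⟩
      simp only [mem_fracSet, not_not]
      have hck0 : c ((e k0).1, (e k0).2) = sgn k0 := by rw [Prod.mk.eta]; exact c_eq k0 hk0
      have hεk0 : ε = cap k0 := hεdef.trans hk0e
      rw [hck0]
      by_cases hcase : e k0 = (v k0, v (k0 + 1))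
      · have hs : sgn k0 = 1 := by rw [hsgndef]; exact if_pos hcase
        have hcapk : cap k0 = (⌈f (e k0).1 (e k0).2⌉ : ℝ) - f (e k0).1 (e k0).2 := by
          rw [hcapdef]; dsimp only; rw [if_pos hcase]
        exact ⟨⌈f (e k0).1 (e k0).2⌉, by rw [hs, hεk0, hcapk]; ring⟩
      · have hs : sgn k0 = -1 := by rw [hsgndef]; exact if_neg hcase
        have hcapk : cap k0 = f (e k0).1 (e k0).2 - (⌊f (e k0).1 (e k0).2⌋ : ℝ) := by
          rw [hcapdef]; dsimp only; rw [if_neg hcase]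
        exact ⟨⌊f (e k0).1 (e k0).2⌋, by rw [hs, hεk0, hcapk]; ring⟩


/-- Integral circulation theorem: on a finite directed graph with integer lower and upper
arc bounds, if there exists a feasible real-valued circulation then there exists a feasible
integer-valued circulation. -/
theorem stmt7 {V : Type*} [Fintype V]
    (l u : V → V → ℤ) (hlu : ∀ v w, l v w ≤ u v w)
    (f : V → V → ℝ)
    (hbound : ∀ v w, (l v w : ℝ) ≤ f v w ∧ f v w ≤ (u v w : ℝ))
    (hcons : ∀ v, ∑ w, f w v = ∑ w, f v w) :
    ∃ g : V → V → ℤ,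
      (∀ v w, l v w ≤ g v w ∧ g v w ≤ u v w) ∧
      (∀ v, ∑ w, g w v = ∑ w, g v w) := by
  classical
  have main : ∀ (n : ℕ) (f : V → V → ℝ), (fracSet f).card = n →
      (∀ v w, (l v w : ℝ) ≤ f v w ∧ f v w ≤ (u v w : ℝ)) →
      (∀ v, ∑ w, f w v = ∑ w, f v w) →
      ∃ g : V → V → ℤ, (∀ v w, l v w ≤ g v w ∧ g v w ≤ u v w) ∧
        (∀ v, ∑ w, g w v = ∑ w, g v w) := by
    intro n
    induction n using Nat.strong_induction_on with
    | _ n ih =>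
      intro f hcard hb hc
      by_cases hne : ∃ p : V × V, ¬ IsIntR (f p.1 p.2)
      · obtain ⟨p, hp⟩ := hne
        obtain ⟨f', hb', hc', hss⟩ := step l u f hb hc (a := p.1) (b := p.2) hp
        exact ih (fracSet f').card (hcard ▸ Finset.card_lt_card hss) f' rfl hb' hc'
      · push_neg at hne
        have hall : ∀ v w : V, ∃ m : ℤ, f v w = (m : ℝ) := fun v w => hne (v, w)
        choose g hg using hall
        refine ⟨g, fun v w => ?_, fun v => ?_⟩
        · constructor
          · have h1 := (hb v w).1
            rw [hg v w] at h1
            exact_mod_cast h1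
          · have h1 := (hb v w).2
            rw [hg v w] at h1
            exact_mod_cast h1
        · have key : ((∑ w, g w v : ℤ) : ℝ) = ((∑ w, g v w : ℤ) : ℝ) := by
            push_cast
            rw [← Finset.sum_congr rfl fun w _ => hg w v,
              ← Finset.sum_congr rfl fun w _ => hg v w]
            exact hc v
          exact_mod_cast key
  exact main (fracSet f).card f rfl hbound hcons
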